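/- In the pentagon mutation sequence with ε⁽⁰⁾_{ij} = 1 and mutation sequence i,j,i,j,i with signs +,+,−,−,−, the five pulled-back vectors are: x⁽¹⁾ = x_i, C⁽¹⁾(x⁽²⁾) = x_j, C⁽¹⁾C⁽²⁾(−x⁽³⁾) = x_i, C⁽¹⁾C⁽²⁾C⁽³⁾(−x⁽⁴⁾) = x_i + x_j, and C⁽¹⁾C⁽²⁾C⁽³⁾C⁽⁴⁾(−x⁽⁵⁾) = x_j, where x⁽ᵃ⁾ denotes the basis vector of the mutated edge in V_{T⁽ᵃ⁻¹⁾}, and all identities hold in V_{T⁽⁰⁾}. -/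

import Mathlib

noncomputable section

/-- The positive part `[a]₊ = max(a,0)` of a real number. -/
def plusPart (a : ℝ) : ℝ := max a 0

/-- Matrix mutation at `k`: `ε'_{ef} = −ε_{ef}` if `k ∈ {e,f}`, and otherwise
`ε'_{ef} = ε_{ef} + (|ε_{ek}|ε_{kf} + ε_{ek}|ε_{kf}|)/2`. -/
def mutMat {I : Type*} [DecidableEq I] (ε : I → I → ℝ) (k : I) : I → I → ℝ :=
  fun e f =>
    if e = k ∨ f = k then -ε e f
    else ε e f + (|ε e k| * ε k f + ε e k * |ε k f|) / 2

/-- The cluster mutation linear map `C_k^{(ϵ)}` from the mutated space (with basis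
`bNew`) to the original space (with basis `bOld` and exchange matrix `ε`), sending
`x'_k ↦ −x_k` and `x'_e ↦ x_e + [ϵ ε_{ek}]₊ x_k` for `e ≠ k`. -/
def mutMap {I : Type*} [Fintype I] [DecidableEq I]
    {M M' : Type*} [AddCommGroup M] [Module ℝ M] [AddCommGroup M'] [Module ℝ M']
    (bNew : Module.Basis I ℝ M') (bOld : Module.Basis I ℝ M)
    (ε : I → I → ℝ) (k : I) (ϵ : ℝ) : M' →ₗ[ℝ] M :=
  bNew.constr ℝ fun e =>
    if e = k then -(bOld k) else bOld e + plusPart (ϵ * ε e k) • bOld k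

lemma mutMap_basis {I : Type*} [Fintype I] [DecidableEq I]
    {M M' : Type*} [AddCommGroup M] [Module ℝ M] [AddCommGroup M'] [Module ℝ M']
    (bNew : Module.Basis I ℝ M') (bOld : Module.Basis I ℝ M)
    (ε : I → I → ℝ) (k : I) (ϵ : ℝ) (e : I) :
    mutMap bNew bOld ε k ϵ (bNew e) =
      if e = k then -(bOld k) else bOld e + plusPart (ϵ * ε e k) • bOld k := by
  rw [mutMap, Module.Basis.constr_basis]

/-- In the pentagon mutation sequence with `ε_{ij} = 1`, mutations at `i,j,i,j,i`
with signs `+,+,−,−,−`, the five pulled-back vectors are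
`x_i`, `x_j`, `x_i`, `x_i + x_j`, and `x_j` in `V_{T⁽⁰⁾}`. -/
theorem mutMap_pentagon_pullbacks
    {I : Type*} [Fintype I] [DecidableEq I]
    {M : Type*} [AddCommGroup M] [Module ℝ M]
    (ε : I → I → ℝ) (hskew : ∀ e f, ε f e = -ε e f)
    (i j : I) (hij : i ≠ j) (h1 : ε i j = 1)
    (b : Module.Basis I ℝ M) :
    b i = b i ∧
    (mutMap b b ε i 1) (b j) = b j ∧
    (mutMap b b ε i 1) ((mutMap b b (mutMat ε i) j 1) (-(b i))) = b i ∧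
    (mutMap b b ε i 1) ((mutMap b b (mutMat ε i) j 1)
      ((mutMap b b (mutMat (mutMat ε i) j) i (-1)) (-(b j)))) = b i + b j ∧
    (mutMap b b ε i 1) ((mutMap b b (mutMat ε i) j 1)
      ((mutMap b b (mutMat (mutMat ε i) j) i (-1))
        ((mutMap b b (mutMat (mutMat (mutMat ε i) j) i) j (-1)) (-(b i))))) = b j := by
  have hji : ε j i = -1 := by rw [hskew i j, h1]
  have hji' : i ≠ j := hij
  have hjin : j ≠ i := hij.symm
  -- matrix entries
  have e1 : (mutMat ε i) i j = -1 := by simp [mutMat, h1]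
  have e2 : (mutMat (mutMat ε i) j) j i = -1 := by simp [mutMat, hji]
  have e3 : (mutMat (mutMat (mutMat ε i) j) i) i j = -1 := by simp [mutMat, h1]
  -- map values
  have C1i : mutMap b b ε i 1 (b i) = -(b i) := by rw [mutMap_basis]; simp
  have C1j : mutMap b b ε i 1 (b j) = b j := by
    rw [mutMap_basis, if_neg hjin, hji]; simp [plusPart]
  have C2i : mutMap b b (mutMat ε i) j 1 (b i) = b i := by
    rw [mutMap_basis, if_neg hji', e1]; simp [plusPart]
  have C2j : mutMap b b (mutMat ε i) j 1 (b j) = -(b j) := by rw [mutMap_basis]; simp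
  have C3i : mutMap b b (mutMat (mutMat ε i) j) i (-1) (b i) = -(b i) := by
    rw [mutMap_basis]; simp
  have C3j : mutMap b b (mutMat (mutMat ε i) j) i (-1) (b j) = b j + b i := by
    rw [mutMap_basis, if_neg hjin, e2]; norm_num [plusPart]
  have C4i : mutMap b b (mutMat (mutMat (mutMat ε i) j) i) j (-1) (b i) = b i + b j := by
    rw [mutMap_basis, if_neg hji', e3]; norm_num [plusPart]
  refine ⟨rfl, C1j, ?_, ?_, ?_⟩ <;>
    simp only [map_neg, map_add, C1i, C1j, C2i, C2j, C3i, C3j, C4i] <;> abel
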